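/- Let $F$ be a field and $v_1,\dots,v_5 \in F^3$ such that all $3\times 3$ determinants $\Delta_{abc} = \det(v_a,v_b,v_c)$ for distinct $a,b,c \in \{1,\dots,5\}$ are nonzero. Then the six-term $(3,5)$ partitioning decoupling identity holds: $\mathrm{PT}^{(3)}(1,2,3,4,5) + \mathrm{PT}^{(3)}(1,2,4,5,3) + \mathrm{PT}^{(3)}(1,2,5,3,4) - \mathrm{PT}^{(3)}(1,3,2,4,5) + \mathrm{PT}^{(3)}(1,3,4,2,5) + \mathrm{PT}^{(3)}(1,3,5,2,4) = 0$. -/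

import Mathlib

/-- `Δ_{abc}`: the determinant of the `3 × 3` matrix whose columns are `v a`, `v b`, `v c`. -/
def Δ3 {F : Type*} [Field F] {N : ℕ} (v : Fin N → Fin 3 → F) (a b c : Fin N) : F :=
  Matrix.det (Matrix.of fun i j => ![v a, v b, v c] j i)

/-- The `k = 3` Parke-Taylor factor
`PT^(3)(a₁,…,a₅) = (Δ_{a₁a₂a₃} Δ_{a₂a₃a₄} Δ_{a₃a₄a₅} Δ_{a₄a₅a₁} Δ_{a₅a₁a₂})⁻¹`. -/
noncomputable def PT3 {F : Type*} [Field F] (v : Fin 5 → Fin 3 → F)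
    (a1 a2 a3 a4 a5 : Fin 5) : F :=
  (Δ3 v a1 a2 a3 * Δ3 v a2 a3 a4 * Δ3 v a3 a4 a5 * Δ3 v a4 a5 a1 * Δ3 v a5 a1 a2)⁻¹

/-- The six-term `(3,5)` partitioning decoupling identity (labels `1, …, 5` are `0, …, 4`):
`PT(1,2,3,4,5) + PT(1,2,4,5,3) + PT(1,2,5,3,4) - PT(1,3,2,4,5) + PT(1,3,4,2,5) + PT(1,3,5,2,4) = 0`. -/

private lemma Δ3_rot1 {F : Type*} [Field F] {N : ℕ} (v : Fin N → Fin 3 → F) (a b c : Fin N) :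
    Δ3 v b c a = Δ3 v a b c := by
  simp only [Δ3, Matrix.det_fin_three, Matrix.of_apply, Matrix.cons_val', Matrix.cons_val_zero,
    Matrix.cons_val_one, Matrix.head_cons, Matrix.empty_val', Matrix.cons_val_fin_one,
    Matrix.head_fin_const, Matrix.cons_val_two, Matrix.tail_cons]
  ring

private lemma Δ3_rot2 {F : Type*} [Field F] {N : ℕ} (v : Fin N → Fin 3 → F) (a b c : Fin N) :
    Δ3 v c a b = Δ3 v a b c := by
  simp only [Δ3, Matrix.det_fin_three, Matrix.of_apply, Matrix.cons_val', Matrix.cons_val_zero,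
    Matrix.cons_val_one, Matrix.head_cons, Matrix.empty_val', Matrix.cons_val_fin_one,
    Matrix.head_fin_const, Matrix.cons_val_two, Matrix.tail_cons]
  ring

private lemma Δ3_swap12 {F : Type*} [Field F] {N : ℕ} (v : Fin N → Fin 3 → F) (a b c : Fin N) :
    Δ3 v b a c = -Δ3 v a b c := by
  simp only [Δ3, Matrix.det_fin_three, Matrix.of_apply, Matrix.cons_val', Matrix.cons_val_zero,
    Matrix.cons_val_one, Matrix.head_cons, Matrix.empty_val', Matrix.cons_val_fin_one,
    Matrix.head_fin_const, Matrix.cons_val_two, Matrix.tail_cons]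
  ring

private lemma Δ3_swap13 {F : Type*} [Field F] {N : ℕ} (v : Fin N → Fin 3 → F) (a b c : Fin N) :
    Δ3 v c b a = -Δ3 v a b c := by
  simp only [Δ3, Matrix.det_fin_three, Matrix.of_apply, Matrix.cons_val', Matrix.cons_val_zero,
    Matrix.cons_val_one, Matrix.head_cons, Matrix.empty_val', Matrix.cons_val_fin_one,
    Matrix.head_fin_const, Matrix.cons_val_two, Matrix.tail_cons]
  ring

private lemma Δ3_swap23 {F : Type*} [Field F] {N : ℕ} (v : Fin N → Fin 3 → F) (a b c : Fin N) :
    Δ3 v a c b = -Δ3 v a b c := by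
  simp only [Δ3, Matrix.det_fin_three, Matrix.of_apply, Matrix.cons_val', Matrix.cons_val_zero,
    Matrix.cons_val_one, Matrix.head_cons, Matrix.empty_val', Matrix.cons_val_fin_one,
    Matrix.head_fin_const, Matrix.cons_val_two, Matrix.tail_cons]
  ring

private lemma pl0 {F : Type*} [Field F] (v : Fin 5 → Fin 3 → F) :
    Δ3 v 0 1 2 * Δ3 v 0 3 4 - Δ3 v 0 1 3 * Δ3 v 0 2 4 + Δ3 v 0 1 4 * Δ3 v 0 2 3 = 0 := by
  simp only [Δ3, Matrix.det_fin_three, Matrix.of_apply, Matrix.cons_val', Matrix.cons_val_zero,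
    Matrix.cons_val_one, Matrix.head_cons, Matrix.empty_val', Matrix.cons_val_fin_one,
    Matrix.head_fin_const, Matrix.cons_val_two, Matrix.tail_cons]
  ring

private lemma pl1 {F : Type*} [Field F] (v : Fin 5 → Fin 3 → F) :
    -(Δ3 v 0 1 2 * Δ3 v 1 3 4) + Δ3 v 0 1 3 * Δ3 v 1 2 4 - Δ3 v 0 1 4 * Δ3 v 1 2 3 = 0 := by
  simp only [Δ3, Matrix.det_fin_three, Matrix.of_apply, Matrix.cons_val', Matrix.cons_val_zero,
    Matrix.cons_val_one, Matrix.head_cons, Matrix.empty_val', Matrix.cons_val_fin_one,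
    Matrix.head_fin_const, Matrix.cons_val_two, Matrix.tail_cons]
  ring

private lemma pl2 {F : Type*} [Field F] (v : Fin 5 → Fin 3 → F) :
    Δ3 v 0 1 2 * Δ3 v 2 3 4 - Δ3 v 0 2 3 * Δ3 v 1 2 4 + Δ3 v 0 2 4 * Δ3 v 1 2 3 = 0 := by
  simp only [Δ3, Matrix.det_fin_three, Matrix.of_apply, Matrix.cons_val', Matrix.cons_val_zero,
    Matrix.cons_val_one, Matrix.head_cons, Matrix.empty_val', Matrix.cons_val_fin_one,
    Matrix.head_fin_const, Matrix.cons_val_two, Matrix.tail_cons]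
  ring

private lemma pl3 {F : Type*} [Field F] (v : Fin 5 → Fin 3 → F) :
    -(Δ3 v 0 1 3 * Δ3 v 2 3 4) + Δ3 v 0 2 3 * Δ3 v 1 3 4 - Δ3 v 0 3 4 * Δ3 v 1 2 3 = 0 := by
  simp only [Δ3, Matrix.det_fin_three, Matrix.of_apply, Matrix.cons_val', Matrix.cons_val_zero,
    Matrix.cons_val_one, Matrix.head_cons, Matrix.empty_val', Matrix.cons_val_fin_one,
    Matrix.head_fin_const, Matrix.cons_val_two, Matrix.tail_cons]
  ring

theorem stmt11 {F : Type*} [Field F] (v : Fin 5 → Fin 3 → F)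
    (hΔ : ∀ a b c : Fin 5, a ≠ b → a ≠ c → b ≠ c → Δ3 v a b c ≠ 0) :
    PT3 v 0 1 2 3 4 + PT3 v 0 1 3 4 2 + PT3 v 0 1 4 2 3 -
      PT3 v 0 2 1 3 4 + PT3 v 0 2 3 1 4 + PT3 v 0 2 4 1 3 = 0 := by
  have n012 : Δ3 v 0 1 2 ≠ 0 := hΔ 0 1 2 (by decide) (by decide) (by decide)
  have n013 : Δ3 v 0 1 3 ≠ 0 := hΔ 0 1 3 (by decide) (by decide) (by decide)
  have n014 : Δ3 v 0 1 4 ≠ 0 := hΔ 0 1 4 (by decide) (by decide) (by decide)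
  have n023 : Δ3 v 0 2 3 ≠ 0 := hΔ 0 2 3 (by decide) (by decide) (by decide)
  have n024 : Δ3 v 0 2 4 ≠ 0 := hΔ 0 2 4 (by decide) (by decide) (by decide)
  have n034 : Δ3 v 0 3 4 ≠ 0 := hΔ 0 3 4 (by decide) (by decide) (by decide)
  have n123 : Δ3 v 1 2 3 ≠ 0 := hΔ 1 2 3 (by decide) (by decide) (by decide)
  have n124 : Δ3 v 1 2 4 ≠ 0 := hΔ 1 2 4 (by decide) (by decide) (by decide)
  have n134 : Δ3 v 1 3 4 ≠ 0 := hΔ 1 3 4 (by decide) (by decide) (by decide)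
  have n234 : Δ3 v 2 3 4 ≠ 0 := hΔ 2 3 4 (by decide) (by decide) (by decide)
  have hP : (Δ3 v 0 1 2 * Δ3 v 0 1 3 * Δ3 v 0 1 4 * Δ3 v 0 2 3 * Δ3 v 0 2 4 * Δ3 v 0 3 4 * Δ3 v 1 2 3 * Δ3 v 1 2 4 * Δ3 v 1 3 4 * Δ3 v 2 3 4) ≠ 0 := by
    exact mul_ne_zero (mul_ne_zero (mul_ne_zero (mul_ne_zero (mul_ne_zero (mul_ne_zero (mul_ne_zero (mul_ne_zero (mul_ne_zero n012 n013) n014) n023) n024) n034) n123) n124) n134) n234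
  have e1 : PT3 v 0 1 2 3 4 = (Δ3 v 0 1 3 * Δ3 v 0 2 3 * Δ3 v 0 2 4 * Δ3 v 1 2 4 * Δ3 v 1 3 4) / (Δ3 v 0 1 2 * Δ3 v 0 1 3 * Δ3 v 0 1 4 * Δ3 v 0 2 3 * Δ3 v 0 2 4 * Δ3 v 0 3 4 * Δ3 v 1 2 3 * Δ3 v 1 2 4 * Δ3 v 1 3 4 * Δ3 v 2 3 4) := by
    have hd : (Δ3 v 0 1 2 * Δ3 v 1 2 3 * Δ3 v 2 3 4 * Δ3 v 3 4 0 * Δ3 v 4 0 1) ≠ 0 := mul_ne_zero (mul_ne_zero (mul_ne_zero (mul_ne_zero (hΔ 0 1 2 (by decide) (by decide) (by decide)) (hΔ 1 2 3 (by decide) (by decide) (by decide))) (hΔ 2 3 4 (by decide) (by decide) (by decide))) (hΔ 3 4 0 (by decide) (by decide) (by decide))) (hΔ 4 0 1 (by decide) (by decide) (by decide))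
    have hfact : (Δ3 v 0 1 2 * Δ3 v 1 2 3 * Δ3 v 2 3 4 * Δ3 v 3 4 0 * Δ3 v 4 0 1) * (Δ3 v 0 1 3 * Δ3 v 0 2 3 * Δ3 v 0 2 4 * Δ3 v 1 2 4 * Δ3 v 1 3 4) = Δ3 v 0 1 2 * Δ3 v 0 1 3 * Δ3 v 0 1 4 * Δ3 v 0 2 3 * Δ3 v 0 2 4 * Δ3 v 0 3 4 * Δ3 v 1 2 3 * Δ3 v 1 2 4 * Δ3 v 1 3 4 * Δ3 v 2 3 4 := by
      rw [Δ3_rot1 v 0 3 4, Δ3_rot2 v 0 1 4]; ring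
    rw [PT3, eq_div_iff hP, ← hfact]
    exact inv_mul_cancel_left₀ hd _
  have e2 : PT3 v 0 1 3 4 2 = (-(Δ3 v 0 1 4 * Δ3 v 0 2 3 * Δ3 v 0 3 4 * Δ3 v 1 2 3 * Δ3 v 1 2 4)) / (Δ3 v 0 1 2 * Δ3 v 0 1 3 * Δ3 v 0 1 4 * Δ3 v 0 2 3 * Δ3 v 0 2 4 * Δ3 v 0 3 4 * Δ3 v 1 2 3 * Δ3 v 1 2 4 * Δ3 v 1 3 4 * Δ3 v 2 3 4) := by
    have hd : (Δ3 v 0 1 3 * Δ3 v 1 3 4 * Δ3 v 3 4 2 * Δ3 v 4 2 0 * Δ3 v 2 0 1) ≠ 0 := mul_ne_zero (mul_ne_zero (mul_ne_zero (mul_ne_zero (hΔ 0 1 3 (by decide) (by decide) (by decide)) (hΔ 1 3 4 (by decide) (by decide) (by decide))) (hΔ 3 4 2 (by decide) (by decide) (by decide))) (hΔ 4 2 0 (by decide) (by decide) (by decide))) (hΔ 2 0 1 (by decide) (by decide) (by decide))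
    have hfact : (Δ3 v 0 1 3 * Δ3 v 1 3 4 * Δ3 v 3 4 2 * Δ3 v 4 2 0 * Δ3 v 2 0 1) * (-(Δ3 v 0 1 4 * Δ3 v 0 2 3 * Δ3 v 0 3 4 * Δ3 v 1 2 3 * Δ3 v 1 2 4)) = Δ3 v 0 1 2 * Δ3 v 0 1 3 * Δ3 v 0 1 4 * Δ3 v 0 2 3 * Δ3 v 0 2 4 * Δ3 v 0 3 4 * Δ3 v 1 2 3 * Δ3 v 1 2 4 * Δ3 v 1 3 4 * Δ3 v 2 3 4 := by
      rw [Δ3_rot1 v 2 3 4, Δ3_swap13 v 0 2 4, Δ3_rot2 v 0 1 2]; ring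
    rw [PT3, eq_div_iff hP, ← hfact]
    exact inv_mul_cancel_left₀ hd _
  have e3 : PT3 v 0 1 4 2 3 = (-(Δ3 v 0 1 2 * Δ3 v 0 2 4 * Δ3 v 0 3 4 * Δ3 v 1 2 3 * Δ3 v 1 3 4)) / (Δ3 v 0 1 2 * Δ3 v 0 1 3 * Δ3 v 0 1 4 * Δ3 v 0 2 3 * Δ3 v 0 2 4 * Δ3 v 0 3 4 * Δ3 v 1 2 3 * Δ3 v 1 2 4 * Δ3 v 1 3 4 * Δ3 v 2 3 4) := by
    have hd : (Δ3 v 0 1 4 * Δ3 v 1 4 2 * Δ3 v 4 2 3 * Δ3 v 2 3 0 * Δ3 v 3 0 1) ≠ 0 := mul_ne_zero (mul_ne_zero (mul_ne_zero (mul_ne_zero (hΔ 0 1 4 (by decide) (by decide) (by decide)) (hΔ 1 4 2 (by decide) (by decide) (by decide))) (hΔ 4 2 3 (by decide) (by decide) (by decide))) (hΔ 2 3 0 (by decide) (by decide) (by decide))) (hΔ 3 0 1 (by decide) (by decide) (by decide))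
    have hfact : (Δ3 v 0 1 4 * Δ3 v 1 4 2 * Δ3 v 4 2 3 * Δ3 v 2 3 0 * Δ3 v 3 0 1) * (-(Δ3 v 0 1 2 * Δ3 v 0 2 4 * Δ3 v 0 3 4 * Δ3 v 1 2 3 * Δ3 v 1 3 4)) = Δ3 v 0 1 2 * Δ3 v 0 1 3 * Δ3 v 0 1 4 * Δ3 v 0 2 3 * Δ3 v 0 2 4 * Δ3 v 0 3 4 * Δ3 v 1 2 3 * Δ3 v 1 2 4 * Δ3 v 1 3 4 * Δ3 v 2 3 4 := by
      rw [Δ3_swap23 v 1 2 4, Δ3_rot2 v 2 3 4, Δ3_rot1 v 0 2 3, Δ3_rot2 v 0 1 3]; ring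
    rw [PT3, eq_div_iff hP, ← hfact]
    exact inv_mul_cancel_left₀ hd _
  have e4 : PT3 v 0 2 1 3 4 = (Δ3 v 0 1 3 * Δ3 v 0 1 4 * Δ3 v 0 2 3 * Δ3 v 1 2 4 * Δ3 v 2 3 4) / (Δ3 v 0 1 2 * Δ3 v 0 1 3 * Δ3 v 0 1 4 * Δ3 v 0 2 3 * Δ3 v 0 2 4 * Δ3 v 0 3 4 * Δ3 v 1 2 3 * Δ3 v 1 2 4 * Δ3 v 1 3 4 * Δ3 v 2 3 4) := by
    have hd : (Δ3 v 0 2 1 * Δ3 v 2 1 3 * Δ3 v 1 3 4 * Δ3 v 3 4 0 * Δ3 v 4 0 2) ≠ 0 := mul_ne_zero (mul_ne_zero (mul_ne_zero (mul_ne_zero (hΔ 0 2 1 (by decide) (by decide) (by decide)) (hΔ 2 1 3 (by decide) (by decide) (by decide))) (hΔ 1 3 4 (by decide) (by decide) (by decide))) (hΔ 3 4 0 (by decide) (by decide) (by decide))) (hΔ 4 0 2 (by decide) (by decide) (by decide))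
    have hfact : (Δ3 v 0 2 1 * Δ3 v 2 1 3 * Δ3 v 1 3 4 * Δ3 v 3 4 0 * Δ3 v 4 0 2) * (Δ3 v 0 1 3 * Δ3 v 0 1 4 * Δ3 v 0 2 3 * Δ3 v 1 2 4 * Δ3 v 2 3 4) = Δ3 v 0 1 2 * Δ3 v 0 1 3 * Δ3 v 0 1 4 * Δ3 v 0 2 3 * Δ3 v 0 2 4 * Δ3 v 0 3 4 * Δ3 v 1 2 3 * Δ3 v 1 2 4 * Δ3 v 1 3 4 * Δ3 v 2 3 4 := by
      rw [Δ3_swap23 v 0 1 2, Δ3_swap12 v 1 2 3, Δ3_rot1 v 0 3 4, Δ3_rot2 v 0 2 4]; ring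
    rw [PT3, eq_div_iff hP, ← hfact]
    exact inv_mul_cancel_left₀ hd _
  have e5 : PT3 v 0 2 3 1 4 = (-(Δ3 v 0 1 2 * Δ3 v 0 1 3 * Δ3 v 0 3 4 * Δ3 v 1 2 4 * Δ3 v 2 3 4)) / (Δ3 v 0 1 2 * Δ3 v 0 1 3 * Δ3 v 0 1 4 * Δ3 v 0 2 3 * Δ3 v 0 2 4 * Δ3 v 0 3 4 * Δ3 v 1 2 3 * Δ3 v 1 2 4 * Δ3 v 1 3 4 * Δ3 v 2 3 4) := by
    have hd : (Δ3 v 0 2 3 * Δ3 v 2 3 1 * Δ3 v 3 1 4 * Δ3 v 1 4 0 * Δ3 v 4 0 2) ≠ 0 := mul_ne_zero (mul_ne_zero (mul_ne_zero (mul_ne_zero (hΔ 0 2 3 (by decide) (by decide) (by decide)) (hΔ 2 3 1 (by decide) (by decide) (by decide))) (hΔ 3 1 4 (by decide) (by decide) (by decide))) (hΔ 1 4 0 (by decide) (by decide) (by decide))) (hΔ 4 0 2 (by decide) (by decide) (by decide))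
    have hfact : (Δ3 v 0 2 3 * Δ3 v 2 3 1 * Δ3 v 3 1 4 * Δ3 v 1 4 0 * Δ3 v 4 0 2) * (-(Δ3 v 0 1 2 * Δ3 v 0 1 3 * Δ3 v 0 3 4 * Δ3 v 1 2 4 * Δ3 v 2 3 4)) = Δ3 v 0 1 2 * Δ3 v 0 1 3 * Δ3 v 0 1 4 * Δ3 v 0 2 3 * Δ3 v 0 2 4 * Δ3 v 0 3 4 * Δ3 v 1 2 3 * Δ3 v 1 2 4 * Δ3 v 1 3 4 * Δ3 v 2 3 4 := by
      rw [Δ3_rot1 v 1 2 3, Δ3_swap12 v 1 3 4, Δ3_rot1 v 0 1 4, Δ3_rot2 v 0 2 4]; ring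
    rw [PT3, eq_div_iff hP, ← hfact]
    exact inv_mul_cancel_left₀ hd _
  have e6 : PT3 v 0 2 4 1 3 = (Δ3 v 0 1 2 * Δ3 v 0 1 4 * Δ3 v 0 3 4 * Δ3 v 1 2 3 * Δ3 v 2 3 4) / (Δ3 v 0 1 2 * Δ3 v 0 1 3 * Δ3 v 0 1 4 * Δ3 v 0 2 3 * Δ3 v 0 2 4 * Δ3 v 0 3 4 * Δ3 v 1 2 3 * Δ3 v 1 2 4 * Δ3 v 1 3 4 * Δ3 v 2 3 4) := by
    have hd : (Δ3 v 0 2 4 * Δ3 v 2 4 1 * Δ3 v 4 1 3 * Δ3 v 1 3 0 * Δ3 v 3 0 2) ≠ 0 := mul_ne_zero (mul_ne_zero (mul_ne_zero (mul_ne_zero (hΔ 0 2 4 (by decide) (by decide) (by decide)) (hΔ 2 4 1 (by decide) (by decide) (by decide))) (hΔ 4 1 3 (by decide) (by decide) (by decide))) (hΔ 1 3 0 (by decide) (by decide) (by decide))) (hΔ 3 0 2 (by decide) (by decide) (by decide))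
    have hfact : (Δ3 v 0 2 4 * Δ3 v 2 4 1 * Δ3 v 4 1 3 * Δ3 v 1 3 0 * Δ3 v 3 0 2) * (Δ3 v 0 1 2 * Δ3 v 0 1 4 * Δ3 v 0 3 4 * Δ3 v 1 2 3 * Δ3 v 2 3 4) = Δ3 v 0 1 2 * Δ3 v 0 1 3 * Δ3 v 0 1 4 * Δ3 v 0 2 3 * Δ3 v 0 2 4 * Δ3 v 0 3 4 * Δ3 v 1 2 3 * Δ3 v 1 2 4 * Δ3 v 1 3 4 * Δ3 v 2 3 4 := by
      rw [Δ3_rot1 v 1 2 4, Δ3_rot2 v 1 3 4, Δ3_rot1 v 0 1 3, Δ3_rot2 v 0 2 3]; ring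
    rw [PT3, eq_div_iff hP, ← hfact]
    exact inv_mul_cancel_left₀ hd _
  have key : (Δ3 v 0 1 3 * Δ3 v 0 2 3 * Δ3 v 0 2 4 * Δ3 v 1 2 4 * Δ3 v 1 3 4) - (Δ3 v 0 1 4 * Δ3 v 0 2 3 * Δ3 v 0 3 4 * Δ3 v 1 2 3 * Δ3 v 1 2 4) - (Δ3 v 0 1 2 * Δ3 v 0 2 4 * Δ3 v 0 3 4 * Δ3 v 1 2 3 * Δ3 v 1 3 4) - (Δ3 v 0 1 3 * Δ3 v 0 1 4 * Δ3 v 0 2 3 * Δ3 v 1 2 4 * Δ3 v 2 3 4) - (Δ3 v 0 1 2 * Δ3 v 0 1 3 * Δ3 v 0 3 4 * Δ3 v 1 2 4 * Δ3 v 2 3 4) + (Δ3 v 0 1 2 * Δ3 v 0 1 4 * Δ3 v 0 3 4 * Δ3 v 1 2 3 * Δ3 v 2 3 4) = 0 := by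
    linear_combination (-(Δ3 v 0 2 3 * Δ3 v 1 2 4 * Δ3 v 1 3 4) - Δ3 v 0 1 4 * Δ3 v 1 2 3 * Δ3 v 2 3 4) * pl0 v + (-(Δ3 v 0 1 4 * Δ3 v 0 2 3 * Δ3 v 2 3 4) - Δ3 v 0 1 2 * Δ3 v 0 3 4 * Δ3 v 2 3 4) * pl1 v + (Δ3 v 0 1 4 * Δ3 v 0 3 4 * Δ3 v 1 2 3 - Δ3 v 0 1 4 * Δ3 v 0 2 3 * Δ3 v 1 3 4 - Δ3 v 0 1 2 * Δ3 v 0 3 4 * Δ3 v 1 3 4) * pl2 v + (Δ3 v 0 1 4 * Δ3 v 0 2 4 * Δ3 v 1 2 3) * pl3 v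
  rw [e1, e2, e3, e4, e5, e6]
  simp only [← add_div, div_sub_div_same]
  rw [div_eq_zero_iff]
  left
  linear_combination key
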